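/- Let 𝒜 be a unital associative ℂ-algebra. Let H, Γ, ξ ∈ 𝒜, L : Fin m → 𝒜, Φ : Fin m → 𝒜, Ψ : Fin μ → 𝒜, and suppose ξ, Γ, every Φ_j and every Ψ_k commute with H and with every L_l (while ξ need not commute with Φ, Ψ or Γ). Let J be a real antisymmetric m×m matrix, Ω := I_m + iJ with entries ω_{lp}, and ℧ := I_μ + iJ' with J' a real antisymmetric μ×μ matrix, entries ℧_{lp}. Define the composite Hamiltonian bH := H + Γ + Σ_{l,p} J_{lp} Φ_l L_p, the composite coupling vector bL := (L_1+Φ_1, …, L_m+Φ_m, Ψ_1, …, Ψ_μ), the block-diagonal Itô matrix bΩ := diag(Ω, ℧), and the generator bG(ξ) := i[bH, ξ] − Σ_{a,b} bΩ_{ab}[ξ, bL_a] bL_b − (1/2)[Σ_{a,b} bΩ_{ab} bL_a bL_b, ξ]. Also define Δ(ξ) := −Σ_{l,p} ω_{lp}[ξ, Φ_l]Φ_p − Σ_{l,p} ℧_{lp}[ξ, Ψ_l]Ψ_p − (1/2)[Σ ω_{lp}Φ_lΦ_p + Σ ℧_{lp}Ψ_lΨ_p, ξ]. Then bG(ξ)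 = i[Γ, ξ] + Δ(ξ) − 2i Σ_{l,p} [ξ, Φ_l] J_{lp} L_p. -/

import Mathlib

open Matrix

/-- Moving a commutator with `ξ` inside a double sum of scalar multiples. -/
lemma key_comm {𝒜 : Type*} [Ring 𝒜] [Algebra ℂ 𝒜] {α β : Type*} [Fintype α] [Fintype β]
    (ξ : 𝒜) (c : α → β → ℂ) (f : α → β → 𝒜) :
    (∑ l, ∑ p, c l p • f l p) * ξ - ξ * ∑ l, ∑ p, c l p • f l p
      = ∑ l, ∑ p, c l p • (f l p * ξ - ξ * f l p) := by
  rw [Finset.sum_mul, Finset.mul_sum, ← Finset.sum_sub_distrib]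
  refine Finset.sum_congr rfl fun l _ => ?_
  rw [Finset.sum_mul, Finset.mul_sum, ← Finset.sum_sub_distrib]
  refine Finset.sum_congr rfl fun p _ => ?_
  rw [smul_mul_assoc, mul_smul_comm, smul_sub]

theorem stmt_15 {𝒜 : Type*} [Ring 𝒜] [Algebra ℂ 𝒜]
    {m μ : ℕ} (H Γ ξ : 𝒜) (L Φ : Fin m → 𝒜) (Ψ : Fin μ → 𝒜)
    (hξH : Commute ξ H) (hΓH : Commute Γ H)
    (hΦH : ∀ j, Commute (Φ j) H) (hΨH : ∀ k, Commute (Ψ k) H)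
    (hξL : ∀ l, Commute ξ (L l)) (hΓL : ∀ l, Commute Γ (L l))
    (hΦL : ∀ j l, Commute (Φ j) (L l)) (hΨL : ∀ k l, Commute (Ψ k) (L l))
    (J : Matrix (Fin m) (Fin m) ℝ) (hJ : Jᵀ = -J)
    (J' : Matrix (Fin μ) (Fin μ) ℝ) (hJ' : J'ᵀ = -J')
    (Ω : Matrix (Fin m) (Fin m) ℂ)
    (hΩ : Ω = 1 + Complex.I • J.map (Complex.ofReal))
    (℧ : Matrix (Fin μ) (Fin μ) ℂ)
    (h℧ : ℧ = 1 + Complex.I • J'.map (Complex.ofReal))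
    (bΩ : Matrix (Fin m ⊕ Fin μ) (Fin m ⊕ Fin μ) ℂ)
    (hbΩ : bΩ = Matrix.fromBlocks Ω 0 0 ℧)
    (bL : Fin m ⊕ Fin μ → 𝒜) (hbL : bL = Sum.elim (fun l => L l + Φ l) Ψ)
    (bH : 𝒜) (hbH : bH = H + Γ + ∑ l, ∑ p, ((J l p : ℝ) : ℂ) • (Φ l * L p))
    (bG : 𝒜 → 𝒜)
    (hbG : ∀ ζ, bG ζ = Complex.I • (bH * ζ - ζ * bH)
        - (∑ a, ∑ b, bΩ a b • ((ζ * bL a - bL a * ζ) * bL b))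
        - ((1 : ℂ) / 2) • ((∑ a, ∑ b, bΩ a b • (bL a * bL b)) * ζ
            - ζ * ∑ a, ∑ b, bΩ a b • (bL a * bL b)))
    (Δ : 𝒜 → 𝒜)
    (hΔ : ∀ ζ, Δ ζ = -(∑ l, ∑ p, Ω l p • ((ζ * Φ l - Φ l * ζ) * Φ p))
        - (∑ l, ∑ p, ℧ l p • ((ζ * Ψ l - Ψ l * ζ) * Ψ p))
        - ((1 : ℂ) / 2) •
          (((∑ l, ∑ p, Ω l p • (Φ l * Φ p)) + ∑ l, ∑ p, ℧ l p • (Ψ l * Ψ p)) * ζ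
            - ζ * ((∑ l, ∑ p, Ω l p • (Φ l * Φ p)) + ∑ l, ∑ p, ℧ l p • (Ψ l * Ψ p)))) :
    bG ξ = Complex.I • (Γ * ξ - ξ * Γ) + Δ ξ
        - (2 * Complex.I) • ∑ l, ∑ p, ((J l p : ℝ) : ℂ) • ((ξ * Φ l - Φ l * ξ) * L p) := by
  subst hbΩ hbL
  -- commutation helpers
  have h1 : ∀ q, ξ * L q = L q * ξ := fun q => (hξL q).eq
  have h1' : ∀ q (x : 𝒜), ξ * (L q * x) = L q * (ξ * x) := fun q x => by
    rw [← mul_assoc, h1, mul_assoc]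
  have h2 : ∀ a b, Φ a * L b = L b * Φ a := fun a b => (hΦL a b).eq
  have h2' : ∀ a b (x : 𝒜), Φ a * (L b * x) = L b * (Φ a * x) := fun a b x => by
    rw [← mul_assoc, h2, mul_assoc]
  have hJ2 : ∀ l p : Fin m, J p l = - J l p := fun l p => by
    have h := congrFun (congrFun hJ p) l
    simp only [Matrix.transpose_apply, Matrix.neg_apply] at h
    linarith
  have hΩe : ∀ l p, Ω l p = (if l = p then (1:ℂ) else 0) + Complex.I * ((J l p : ℝ) : ℂ) := by
    intro l p
    rw [hΩ]
    simp [Matrix.one_apply, Matrix.add_apply, Matrix.smul_apply, Matrix.map_apply, smul_eq_mul]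
  -- diagonal extraction: ∑∑ Ω l p • (C l * L p)
  have e1 : (∑ l, ∑ p, Ω l p • ((ξ * Φ l - Φ l * ξ) * L p))
      = (∑ l, (ξ * Φ l - Φ l * ξ) * L l)
        + Complex.I • ∑ l, ∑ p, ((J l p : ℝ) : ℂ) • ((ξ * Φ l - Φ l * ξ) * L p) := by
    rw [Finset.smul_sum, ← Finset.sum_add_distrib]
    refine Finset.sum_congr rfl fun l _ => ?_
    rw [Finset.smul_sum]
    have h : ∀ p, Ω l p • ((ξ * Φ l - Φ l * ξ) * L p)
        = (if l = p then (ξ * Φ l - Φ l * ξ) * L p else 0)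
          + Complex.I • (((J l p : ℝ) : ℂ) • ((ξ * Φ l - Φ l * ξ) * L p)) := by
      intro p
      rw [hΩe, add_smul, ite_smul, one_smul, zero_smul, mul_smul]
    rw [Finset.sum_congr rfl fun p _ => h p, Finset.sum_add_distrib,
      Finset.sum_ite_eq, if_pos (Finset.mem_univ l)]
  -- transposed version
  have e2 : (∑ l, ∑ p, Ω l p • ((ξ * Φ p - Φ p * ξ) * L l))
      = (∑ l, (ξ * Φ l - Φ l * ξ) * L l)
        - Complex.I • ∑ l, ∑ p, ((J l p : ℝ) : ℂ) • ((ξ * Φ l - Φ l * ξ) * L p) := by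
    rw [Finset.sum_comm, Finset.smul_sum, ← Finset.sum_sub_distrib]
    refine Finset.sum_congr rfl fun x _ => ?_
    rw [Finset.smul_sum]
    have h : ∀ y, Ω y x • ((ξ * Φ x - Φ x * ξ) * L y)
        = (if y = x then (ξ * Φ x - Φ x * ξ) * L y else 0)
          - Complex.I • (((J x y : ℝ) : ℂ) • ((ξ * Φ x - Φ x * ξ) * L y)) := by
      intro y
      have hneg : ((J y x : ℝ) : ℂ) = -((J x y : ℝ) : ℂ) := by rw [hJ2]; push_cast; ring
      rw [hΩe, hneg, add_smul, ite_smul, one_smul, zero_smul, mul_neg, neg_smul, mul_smul,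
        ← sub_eq_add_neg]
    rw [Finset.sum_congr rfl fun y _ => h y, Finset.sum_sub_distrib,
      Finset.sum_ite_eq', if_pos (Finset.mem_univ x)]
  -- piece A: the Hamiltonian commutator
  have hS : (∑ l, ∑ p, ((J l p : ℝ) : ℂ) • (Φ l * L p)) * ξ
      - ξ * ∑ l, ∑ p, ((J l p : ℝ) : ℂ) • (Φ l * L p)
      = -∑ l, ∑ p, ((J l p : ℝ) : ℂ) • ((ξ * Φ l - Φ l * ξ) * L p) := by
    rw [key_comm, ← Finset.sum_neg_distrib]
    refine Finset.sum_congr rfl fun l _ => ?_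
    rw [← Finset.sum_neg_distrib]
    refine Finset.sum_congr rfl fun p _ => ?_
    rw [← smul_neg]
    congr 1
    simp only [sub_mul, mul_assoc, h1, h1', h2, h2']
    noncomm_ring
  have hA : Complex.I • (bH * ξ - ξ * bH)
      = Complex.I • (Γ * ξ - ξ * Γ)
        - Complex.I • ∑ l, ∑ p, ((J l p : ℝ) : ℂ) • ((ξ * Φ l - Φ l * ξ) * L p) := by
    rw [hbH]
    have h : (H + Γ + ∑ l, ∑ p, ((J l p : ℝ) : ℂ) • (Φ l * L p)) * ξ
        - ξ * (H + Γ + ∑ l, ∑ p, ((J l p : ℝ) : ℂ) • (Φ l * L p))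
        = (Γ * ξ - ξ * Γ)
          + ((∑ l, ∑ p, ((J l p : ℝ) : ℂ) • (Φ l * L p)) * ξ
            - ξ * ∑ l, ∑ p, ((J l p : ℝ) : ℂ) • (Φ l * L p)) := by
      simp only [add_mul, mul_add, hξH.eq]
      abel
    rw [h, hS, ← sub_eq_add_neg, smul_sub]
  -- piece B: the dissipator cross term
  have hB : (∑ a, ∑ b, Matrix.fromBlocks Ω 0 0 ℧ a b •
        ((ξ * Sum.elim (fun l => L l + Φ l) Ψ a - Sum.elim (fun l => L l + Φ l) Ψ a * ξ)
          * Sum.elim (fun l => L l + Φ l) Ψ b))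
      = (∑ l, ∑ p, Ω l p • ((ξ * Φ l - Φ l * ξ) * Φ p))
        + (∑ l, ∑ p, ℧ l p • ((ξ * Ψ l - Ψ l * ξ) * Ψ p))
        + (∑ l, (ξ * Φ l - Φ l * ξ) * L l)
        + Complex.I • ∑ l, ∑ p, ((J l p : ℝ) : ℂ) • ((ξ * Φ l - Φ l * ξ) * L p) := by
    simp only [Fintype.sum_sum_type, Matrix.fromBlocks_apply₁₁, Matrix.fromBlocks_apply₁₂,
      Matrix.fromBlocks_apply₂₁, Matrix.fromBlocks_apply₂₂, Sum.elim_inl, Sum.elim_inr,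
      Matrix.zero_apply, zero_smul, Finset.sum_const_zero, add_zero, zero_add]
    have split : ∀ l p : Fin m, Ω l p • ((ξ * (L l + Φ l) - (L l + Φ l) * ξ) * (L p + Φ p))
        = Ω l p • ((ξ * Φ l - Φ l * ξ) * Φ p) + Ω l p • ((ξ * Φ l - Φ l * ξ) * L p) := by
      intro l p
      rw [← smul_add]
      congr 1
      simp only [mul_add, add_mul, sub_mul, h1]
      noncomm_ring
    rw [Finset.sum_congr rfl fun l _ => Finset.sum_congr rfl fun p _ => split l p]
    simp only [Finset.sum_add_distrib]
    rw [e1]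
    abel
  -- piece C: the anticommutator-like term
  have hC : (∑ a, ∑ b, Matrix.fromBlocks Ω 0 0 ℧ a b •
        (Sum.elim (fun l => L l + Φ l) Ψ a * Sum.elim (fun l => L l + Φ l) Ψ b)) * ξ
      - ξ * ∑ a, ∑ b, Matrix.fromBlocks Ω 0 0 ℧ a b •
        (Sum.elim (fun l => L l + Φ l) Ψ a * Sum.elim (fun l => L l + Φ l) Ψ b)
      = (((∑ l, ∑ p, Ω l p • (Φ l * Φ p)) + ∑ l, ∑ p, ℧ l p • (Ψ l * Ψ p)) * ξ
          - ξ * ((∑ l, ∑ p, Ω l p • (Φ l * Φ p)) + ∑ l, ∑ p, ℧ l p • (Ψ l * Ψ p)))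
        - (∑ l, ∑ p, Ω l p • ((ξ * Φ p - Φ p * ξ) * L l))
        - (∑ l, ∑ p, Ω l p • ((ξ * Φ l - Φ l * ξ) * L p)) := by
    have hT : (∑ a, ∑ b, Matrix.fromBlocks Ω 0 0 ℧ a b •
          (Sum.elim (fun l => L l + Φ l) Ψ a * Sum.elim (fun l => L l + Φ l) Ψ b))
        = (∑ l, ∑ p, Ω l p • ((L l + Φ l) * (L p + Φ p)))
          + ∑ l, ∑ p, ℧ l p • (Ψ l * Ψ p) := by
      simp only [Fintype.sum_sum_type, Matrix.fromBlocks_apply₁₁, Matrix.fromBlocks_apply₁₂,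
        Matrix.fromBlocks_apply₂₁, Matrix.fromBlocks_apply₂₂, Sum.elim_inl, Sum.elim_inr,
        Matrix.zero_apply, zero_smul, Finset.sum_const_zero, add_zero, zero_add]
    rw [hT]
    have expand : ∀ X Y : 𝒜, (X + Y) * ξ - ξ * (X + Y)
        = (X * ξ - ξ * X) + (Y * ξ - ξ * Y) := fun X Y => by noncomm_ring
    rw [expand, expand]
    have hT1 : (∑ l, ∑ p, Ω l p • ((L l + Φ l) * (L p + Φ p))) * ξ
        - ξ * ∑ l, ∑ p, Ω l p • ((L l + Φ l) * (L p + Φ p))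
        = ((∑ l, ∑ p, Ω l p • (Φ l * Φ p)) * ξ - ξ * ∑ l, ∑ p, Ω l p • (Φ l * Φ p))
          - (∑ l, ∑ p, Ω l p • ((ξ * Φ p - Φ p * ξ) * L l))
          - (∑ l, ∑ p, Ω l p • ((ξ * Φ l - Φ l * ξ) * L p)) := by
      rw [key_comm (c := Ω), key_comm (c := Ω), ← Finset.sum_sub_distrib, ← Finset.sum_sub_distrib]
      refine Finset.sum_congr rfl fun l _ => ?_
      rw [← Finset.sum_sub_distrib, ← Finset.sum_sub_distrib]
      refine Finset.sum_congr rfl fun p _ => ?_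
      rw [← smul_sub, ← smul_sub]
      congr 1
      simp only [mul_add, add_mul, sub_mul, mul_assoc, h1, h1', h2, h2']
      noncomm_ring
    rw [hT1]
    abel
  -- assemble
  rw [hbG, hΔ, hA, hB, hC, e2, e1]
  module
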